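/- arXiv:2303.03247 — 3 statements merged into one kernel-verified Lean document; each statement's English description precedes it below -/
import Mathlib

section
/- Let φ : ℝ≥0 × ℝⁿ → ℝⁿ satisfy the semigroup (flow) property φ(θ+ϑ, x) = φ(θ, φ(ϑ, x)) for all θ, ϑ ≥ 0 and x ∈ ℝⁿ. Let S, S_b ⊆ ℝⁿ with S_b ⊆ S, suppose x ∈ S_b implies φ(θ, x) ∈ S_b for all θ ≥ 0, and fix T ≥ 0. Define S_I = {x : φ(θ, x) ∈ S for all θ ∈ [0,T], and φ(T, x) ∈ S_b}. Then S_I is invariant under the flow: x ∈ S_I implies φ(ϑ, x) ∈ S_I for all ϑ ≥ 0. -/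
theorem stmt_0 {n : ℕ} (φ : ℝ → (Fin n → ℝ) → (Fin n → ℝ))
    (hsg : ∀ θ ϑ : ℝ, 0 ≤ θ → 0 ≤ ϑ → ∀ x, φ (θ + ϑ) x = φ θ (φ ϑ x))
    (S Sb : Set (Fin n → ℝ)) (hsub : Sb ⊆ S)
    (hinv : ∀ x ∈ Sb, ∀ θ : ℝ, 0 ≤ θ → φ θ x ∈ Sb)
    (T : ℝ) (hT : 0 ≤ T)
    (SI : Set (Fin n → ℝ))
    (hSI : SI = {x | (∀ θ ∈ Set.Icc (0:ℝ) T, φ θ x ∈ S) ∧ φ T x ∈ Sb}) :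
    ∀ x ∈ SI, ∀ ϑ : ℝ, 0 ≤ ϑ → φ ϑ x ∈ SI := by
  subst hSI
  rintro x ⟨hx1, hx2⟩ ϑ hϑ
  constructor
  · intro θ ⟨hθ0, hθT⟩
    rw [← hsg θ ϑ hθ0 hϑ]
    by_cases h : θ + ϑ ≤ T
    · exact hx1 _ ⟨by linarith, h⟩
    · have : θ + ϑ = (θ + ϑ - T) + T := by ring
      rw [this, hsg _ T (by linarith) hT]
      exact hsub (hinv _ hx2 _ (by linarith))
  · rw [← hsg T ϑ hT hϑ, show T + ϑ = ϑ + T by ring, hsg ϑ T hϑ hT]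
    exact hinv _ hx2 _ hϑ
end

section
/- Let h : ℝ≥0 → ℝ be differentiable and let A ≥ 0, λ > γ > 0. Suppose h'(t) ≥ −γ h(t) − A e^{−λt} for all t ≥ 0 and h(0) ≥ A/(λ − γ). Then h(t) ≥ 0 for all t ≥ 0. -/
theorem stmt_7 (h : ℝ → ℝ) (A γ lam : ℝ) (hA : 0 ≤ A) (hγ : 0 < γ) (hγlam : γ < lam)
    (hdiff : Differentiable ℝ h)
    (hineq : ∀ t : ℝ, 0 ≤ t → deriv h t ≥ -γ * h t - A * Real.exp (-lam * t))
    (h0 : h 0 ≥ A / (lam - γ)) :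
    ∀ t : ℝ, 0 ≤ t → h t ≥ 0 := by
  have hlg : 0 < lam - γ := by linarith
  set c : ℝ := A / (lam - γ) with hc
  have hcnn : 0 ≤ c := div_nonneg hA hlg.le
  set F : ℝ → ℝ := fun t => (h t - c * Real.exp (-lam * t)) * Real.exp (γ * t) with hF
  have hder : ∀ t : ℝ, HasDerivAt F
      ((deriv h t - c * (-lam * Real.exp (-lam * t))) * Real.exp (γ * t)
        + (h t - c * Real.exp (-lam * t)) * (γ * Real.exp (γ * t))) t := by
    intro t
    have h1 : HasDerivAt h (deriv h t) t := (hdiff t).hasDerivAt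
    have h2 : HasDerivAt (fun t : ℝ => Real.exp (-lam * t)) (-lam * Real.exp (-lam * t)) t := by
      simpa [mul_comm] using (((hasDerivAt_id t).const_mul (-lam)).exp)
    have h3 : HasDerivAt (fun t : ℝ => Real.exp (γ * t)) (γ * Real.exp (γ * t)) t := by
      simpa [mul_comm] using (((hasDerivAt_id t).const_mul γ).exp)
    exact (h1.sub (h2.const_mul c)).mul h3
  have hmono : MonotoneOn F (Set.Ici (0:ℝ)) := by
    apply monotoneOn_of_deriv_nonneg (convex_Ici 0)
    · exact (Continuous.continuousOn (by
        have : Differentiable ℝ F := fun t => (hder t).differentiableAt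
        exact this.continuous))
    · intro t ht
      exact (hder t).differentiableAt.differentiableWithinAt
    · intro t ht
      simp only [interior_Ici, Set.mem_Ioi] at ht
      rw [(hder t).deriv]
      have hi := hineq t ht.le
      have he : (0:ℝ) < Real.exp (γ * t) := Real.exp_pos _
      have hce : c * (lam - γ) = A := by rw [hc, div_mul_cancel₀ _ hlg.ne']
      nlinarith [Real.exp_pos (-lam * t), mul_pos (Real.exp_pos (-lam * t)) he,
        mul_le_mul_of_nonneg_right hi he.le]
  intro t ht
  have hFt : F 0 ≤ F t := hmono (Set.self_mem_Ici) ht ht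
  have hF0 : 0 ≤ F 0 := by
    simp only [hF, mul_zero, Real.exp_zero, mul_one]
    linarith
  have : 0 ≤ h t - c * Real.exp (-lam * t) := by
    have he : (0:ℝ) < Real.exp (γ * t) := Real.exp_pos _
    have h1 : 0 ≤ (h t - c * Real.exp (-lam * t)) * Real.exp (γ * t) := le_trans hF0 hFt
    exact (mul_nonneg_iff_of_pos_right he).mp h1
  nlinarith [Real.exp_pos (-lam * t), mul_nonneg hcnn (Real.exp_pos (-lam * t)).le]
end

section
/- Let h : ℝ≥0 → ℝ be differentiable and let γ, σ > 0, A, B ≥ 0, λ > γ. Suppose that for all t ≥ 0, h'(t) ≥ −γ h(t) − (A e^{−λt} + B)/(4σ), and that h(0) ≥ A/(4σ(λ − γ)) − B/(4σγ). Then h(t) ≥ −B/(4σγ) for all t ≥ 0. -/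
theorem stmt_14 (h : ℝ → ℝ) (γ σ A B lam : ℝ) (hγ : 0 < γ) (hσ : 0 < σ)
    (hA : 0 ≤ A) (hB : 0 ≤ B) (hγlam : γ < lam) (hdiff : Differentiable ℝ h)
    (hineq : ∀ t : ℝ, 0 ≤ t →
      deriv h t ≥ -γ * h t - (A * Real.exp (-lam * t) + B) / (4 * σ))
    (h0 : h 0 ≥ A / (4 * σ * (lam - γ)) - B / (4 * σ * γ)) :
    ∀ t : ℝ, 0 ≤ t → h t ≥ -B / (4 * σ * γ) := by
  set c1 : ℝ := A / (4 * σ * (lam - γ)) with hc1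
  set c2 : ℝ := B / (4 * σ * γ) with hc2
  have hlg : 0 < lam - γ := by linarith
  have hc1nn : 0 ≤ c1 := by positivity
  set G : ℝ → ℝ := fun t => (h t - c1 * Real.exp (-lam * t) + c2) * Real.exp (γ * t)
    with hG
  have hGderiv : ∀ t : ℝ, HasDerivAt G
      ((deriv h t - c1 * (Real.exp (-lam * t) * (-lam))) * Real.exp (γ * t)
        + (h t - c1 * Real.exp (-lam * t) + c2) * (Real.exp (γ * t) * γ)) t := by
    intro t
    have h1 : HasDerivAt (fun t => Real.exp (-lam * t)) (Real.exp (-lam * t) * (-lam)) t := by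
      simpa using ((hasDerivAt_id t).const_mul (-lam)).exp
    have h2 : HasDerivAt (fun t => Real.exp (γ * t)) (Real.exp (γ * t) * γ) t := by
      simpa using ((hasDerivAt_id t).const_mul γ).exp
    exact (((hdiff t).hasDerivAt.sub (h1.const_mul c1)).add_const c2).mul h2
  have hGdiff : Differentiable ℝ G := fun t => (hGderiv t).differentiableAt
  have hmono : MonotoneOn G (Set.Ici (0:ℝ)) := by
    apply monotoneOn_of_deriv_nonneg (convex_Ici 0) hGdiff.continuous.continuousOn
      (hGdiff.differentiableOn)
    intro t ht
    simp only [interior_Ici, Set.mem_Ioi] at ht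
    rw [(hGderiv t).deriv]
    have hkey := hineq t ht.le
    have hepos : 0 < Real.exp (γ * t) := Real.exp_pos _
    have heq : 0 < Real.exp (-lam * t) := Real.exp_pos _
    have hineq2 : deriv h t - c1 * (Real.exp (-lam * t) * (-lam))
        + (h t - c1 * Real.exp (-lam * t) + c2) * γ ≥ 0 := by
      have hc1e : c1 * (lam - γ) = A / (4 * σ) := by
        rw [hc1]; field_simp
      have hc2e : c2 * γ = B / (4 * σ) := by
        rw [hc2]; field_simp
      have h4 : (A * Real.exp (-lam * t) + B) / (4 * σ)
          = c1 * (lam - γ) * Real.exp (-lam * t) + c2 * γ := by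
        rw [hc1e, hc2e]; ring
      nlinarith [hkey, h4]
    nlinarith [hineq2, hepos, mul_nonneg hineq2 hepos.le]
  intro t ht
  have hG0 : 0 ≤ G 0 := by
    simp only [hG, mul_zero, neg_zero, Real.exp_zero, mul_one]
    linarith
  have hGt : G 0 ≤ G t := hmono Set.self_mem_Ici ht ht
  have hepos : 0 < Real.exp (γ * t) := Real.exp_pos _
  have hHt : 0 ≤ h t - c1 * Real.exp (-lam * t) + c2 := by
    by_contra hcon
    push_neg at hcon
    have : G t < 0 := mul_neg_of_neg_of_pos hcon hepos
    linarith
  have : 0 ≤ c1 * Real.exp (-lam * t) := by positivity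
  have : -B / (4 * σ * γ) = -c2 := by rw [hc2]; ring
  rw [this]
  linarith
end
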